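/- Let $\nu : [u_1, u_2] \times [v_1, v_2] \to \mathbb{R}$ be continuous with $\nu < 0$, satisfying $\partial_v \nu = F \nu$ where $F$ is continuous and $F(u,v) \ge H > 0$ for all $(u,v)$, and $\nu(u, v_1) = -1$. Further suppose $r(u,v) = r(0,v) + \int_0^u \nu(\bar{u}, v)\,d\bar{u}$ where $r(0, v) \le r_+$. Then $r(u, v) \le r_+ - u\, e^{H(v - v_1)}$ for all $(u,v) \in [u_1,u_2]\times[v_1,v_2]$ with $u \ge 0$. -/

import Mathlib

theorem stmt_6 (u1 u2 v1 v2 H rplus : ℝ) (hu1 : u1 ≤ 0) (hu2 : 0 ≤ u2) (hv : v1 ≤ v2)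
    (hH : 0 < H)
    (ν F r : ℝ → ℝ → ℝ)
    (hcont : ContinuousOn (fun q : ℝ × ℝ => ν q.1 q.2) (Set.Icc u1 u2 ×ˢ Set.Icc v1 v2))
    (hneg : ∀ u ∈ Set.Icc u1 u2, ∀ v ∈ Set.Icc v1 v2, ν u v < 0)
    (hFcont : ContinuousOn (fun q : ℝ × ℝ => F q.1 q.2) (Set.Icc u1 u2 ×ˢ Set.Icc v1 v2))
    (hF : ∀ u ∈ Set.Icc u1 u2, ∀ v ∈ Set.Icc v1 v2, H ≤ F u v)
    (hode : ∀ u ∈ Set.Icc u1 u2, ∀ v ∈ Set.Icc v1 v2,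
      HasDerivAt (fun v' => ν u v') (F u v * ν u v) v)
    (hinit : ∀ u ∈ Set.Icc u1 u2, ν u v1 = -1)
    (hr : ∀ u ∈ Set.Icc u1 u2, ∀ v ∈ Set.Icc v1 v2,
      r u v = r 0 v + ∫ x in (0:ℝ)..u, ν x v)
    (hr0 : ∀ v ∈ Set.Icc v1 v2, r 0 v ≤ rplus) :
    ∀ u ∈ Set.Icc u1 u2, ∀ v ∈ Set.Icc v1 v2, 0 ≤ u →
      r u v ≤ rplus - u * Real.exp (H * (v - v1)) := by
  -- key pointwise bound: ν u v ≤ -exp(H(v-v1))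
  have key : ∀ u ∈ Set.Icc u1 u2, ∀ v ∈ Set.Icc v1 v2,
      ν u v ≤ -Real.exp (H * (v - v1)) := by
    intro u hu v hvv
    set h : ℝ → ℝ := fun v' => ν u v' * Real.exp (-(H * (v' - v1))) with hh
    have hderiv : ∀ x ∈ Set.Icc v1 v2,
        HasDerivAt h ((F u x - H) * ν u x * Real.exp (-(H * (x - v1)))) x := by
      intro x hx
      have h1 : HasDerivAt (fun v' => ν u v') (F u x * ν u x) x := hode u hu x hx
      have h2 : HasDerivAt (fun v' : ℝ => -(H * (v' - v1))) (-H) x := by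
        have : HasDerivAt (fun v' : ℝ => v' - v1) 1 x :=
          (hasDerivAt_id x).sub_const v1
        have h2' := (this.const_mul H).neg
        rw [mul_one] at h2'
        exact h2'
      have h3 : HasDerivAt (fun v' : ℝ => Real.exp (-(H * (v' - v1))))
          (Real.exp (-(H * (x - v1))) * (-H)) x := (Real.hasDerivAt_exp _).comp x h2
      have := h1.mul h3
      have e : (F u x - H) * ν u x * Real.exp (-(H * (x - v1))) =
          F u x * ν u x * Real.exp (-(H * (x - v1))) + ν u x * (Real.exp (-(H * (x - v1))) * -H) := by
        ring
      rw [e]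
      exact this
    have hcont' : ContinuousOn h (Set.Icc v1 v2) := fun x hx =>
      ((hderiv x hx).continuousAt).continuousWithinAt
    have hanti : AntitoneOn h (Set.Icc v1 v2) := by
      apply antitoneOn_of_deriv_nonpos (convex_Icc v1 v2) hcont'
      · intro x hx
        rw [interior_Icc] at hx
        exact ((hderiv x (Set.Ioo_subset_Icc_self hx)).differentiableAt).differentiableWithinAt
      · intro x hx
        rw [interior_Icc] at hx
        have hx' := Set.Ioo_subset_Icc_self hx
        rw [(hderiv x hx').deriv]
        have h1 : 0 ≤ F u x - H := sub_nonneg.2 (hF u hu x hx')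
        have h2 : ν u x < 0 := hneg u hu x hx'
        have h3 : (0:ℝ) < Real.exp (-(H * (x - v1))) := Real.exp_pos _
        have : (F u x - H) * ν u x ≤ 0 := mul_nonpos_of_nonneg_of_nonpos h1 h2.le
        exact mul_nonpos_of_nonpos_of_nonneg this h3.le
    have hle : h v ≤ h v1 := hanti (Set.left_mem_Icc.2 hv) hvv hvv.1
    have hv1 : h v1 = -1 := by simp [hh, hinit u hu]
    rw [hv1] at hle
    calc ν u v = ν u v * Real.exp (-(H * (v - v1))) * Real.exp (H * (v - v1)) := by
          rw [mul_assoc, ← Real.exp_add]; simp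
      _ ≤ (-1) * Real.exp (H * (v - v1)) :=
          mul_le_mul_of_nonneg_right hle (Real.exp_pos _).le
      _ = -Real.exp (H * (v - v1)) := by ring
  intro u hu v hvv hu0
  rw [hr u hu v hvv]
  have hsub : Set.Icc (0:ℝ) u ⊆ Set.Icc u1 u2 :=
    Set.Icc_subset_Icc hu1 hu.2
  have hνcont : ContinuousOn (fun x => ν x v) (Set.Icc 0 u) := by
    have hc : Continuous (fun x : ℝ => (x, v)) := continuous_id.prodMk continuous_const
    exact hcont.comp hc.continuousOn (fun x hx => Set.mk_mem_prod (hsub hx) hvv)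
  have hint : IntervalIntegrable (fun x => ν x v) MeasureTheory.volume 0 u := by
    apply ContinuousOn.intervalIntegrable
    rwa [Set.uIcc_of_le hu0]
  have hmono : (∫ x in (0:ℝ)..u, ν x v) ≤ ∫ _x in (0:ℝ)..u, -Real.exp (H * (v - v1)) := by
    apply intervalIntegral.integral_mono_on hu0 hint intervalIntegrable_const
    intro x hx
    exact key x (hsub hx) v hvv
  rw [intervalIntegral.integral_const, smul_eq_mul] at hmono
  have := hr0 v hvv
  nlinarith [hmono, this]
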